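/- arXiv:1912.05482 — 2 statements merged into one kernel-verified Lean document; each statement's English description precedes it below -/
import Mathlib

section
/- For Re(α) > 0, Re(λ) > -1, and β ∈ ℂ, the tempered fractional integral of f(t) = (t-a)^λ is T_a I^(α,β) [(u-a)^λ](t) = (t-a)^{λ+α} · (Γ(λ+1)/Γ(λ+α+1)) · ₁F₁(α; λ+α+1; -β(t-a)) for t > a, where ₁F₁ is the confluent hypergeometric function. -/
open MeasureTheory intervalIntegral

/-- Tempered fractional integral (complex-valued). -/
noncomputable def temperedIntegral (a : ℝ) (α β : ℂ) (f : ℝ → ℂ) (t : ℝ) : ℂ :=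
  (1 / Complex.Gamma α) * ∫ u in a..t, (↑(t - u) : ℂ) ^ (α - 1) *
    Complex.exp (-β * ↑(t - u)) * f u

/-- Confluent hypergeometric function `₁F₁(a; b; z)` as a series. -/
noncomputable def hyp1F1 (a b z : ℂ) : ℂ :=
  ∑' m : ℕ, (Complex.Gamma (a + m) * Complex.Gamma b /
      (Complex.Gamma a * Complex.Gamma (b + m))) * z ^ m / (m.factorial : ℂ)

lemma contOn_cpow_sub {t : ℝ} (p : ℂ) {s : Set ℝ} (hs : ∀ u ∈ s, u < t) :
    ContinuousOn (fun u : ℝ => (↑(t - u) : ℂ) ^ p) s := fun u hu => by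
  have h : (0:ℝ) < t - u := by linarith [hs u hu]
  exact (((Complex.continuous_ofReal.comp (continuous_const.sub continuous_id)).continuousAt).cpow
    continuousAt_const (by simpa using Complex.ofReal_mem_slitPlane.2 h)).continuousWithinAt

lemma contOn_cpow_sub' {a : ℝ} (p : ℂ) {s : Set ℝ} (hs : ∀ u ∈ s, a < u) :
    ContinuousOn (fun u : ℝ => (↑(u - a) : ℂ) ^ p) s := fun u hu => by
  have h : (0:ℝ) < u - a := by linarith [hs u hu]
  exact (((Complex.continuous_ofReal.comp (continuous_id.sub continuous_const)).continuousAt).cpow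
    continuousAt_const (by simpa using Complex.ofReal_mem_slitPlane.2 h)).continuousWithinAt

lemma betaKernel_intervalIntegrable {a t : ℝ} (ht : a < t) {p q : ℂ}
    (hp : 0 < p.re) (hq : 0 < q.re) :
    IntervalIntegrable (fun u : ℝ => (↑(t - u) : ℂ) ^ (p - 1) * (↑(u - a) : ℂ) ^ (q - 1))
      volume a t := by
  set m := (a + t) / 2 with hm
  have ham : a < m := by rw [hm]; linarith
  have hmt : m < t := by rw [hm]; linarith
  have h1 : IntervalIntegrable (fun u : ℝ => (↑(u - a) : ℂ) ^ (q - 1)) volume a m := by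
    have := (intervalIntegrable_cpow' (a := 0) (b := m - a) (r := q - 1)
      (by simpa using hq)).comp_sub_right a
    simpa using this
  have h2 : IntervalIntegrable (fun u : ℝ => (↑(t - u) : ℂ) ^ (p - 1)) volume m t := by
    have := ((intervalIntegrable_cpow' (a := 0) (b := t - m) (r := p - 1)
      (by simpa using hp)).comp_sub_left t).symm
    simpa using this
  have hA : IntervalIntegrable (fun u : ℝ => (↑(t - u) : ℂ) ^ (p - 1) * (↑(u - a) : ℂ) ^ (q - 1))
      volume a m := by
    apply h1.continuousOn_mul
    apply contOn_cpow_sub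
    intro u hu
    rcases Set.mem_uIcc.1 hu with h | h <;> linarith [h.1, h.2]
  have hB : IntervalIntegrable (fun u : ℝ => (↑(t - u) : ℂ) ^ (p - 1) * (↑(u - a) : ℂ) ^ (q - 1))
      volume m t := by
    apply h2.mul_continuousOn
    apply contOn_cpow_sub'
    intro u hu
    rcases Set.mem_uIcc.1 hu with h | h <;> linarith [h.1, h.2]
  exact hA.trans hB

lemma betaKernel_eval {a t : ℝ} (ht : a < t) (p q : ℂ) :
    ∫ u in a..t, (↑(t - u) : ℂ) ^ (p - 1) * (↑(u - a) : ℂ) ^ (q - 1) =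
      (↑(t - a) : ℂ) ^ (p + q - 1) * Complex.betaIntegral p q := by
  have hc : 0 < t - a := by linarith
  have h1 := intervalIntegral.integral_comp_add_right (a := 0) (b := t - a)
    (fun u : ℝ => (↑(t - u) : ℂ) ^ (p - 1) * (↑(u - a) : ℂ) ^ (q - 1)) a
  rw [zero_add, sub_add_cancel] at h1
  rw [← h1]
  have h2 : ∀ x : ℝ, (↑(t - (x + a)) : ℂ) ^ (p - 1) * (↑(x + a - a) : ℂ) ^ (q - 1)
      = (↑x : ℂ) ^ (q - 1) * ((↑(t - a) : ℂ) - ↑x) ^ (p - 1) := by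
    intro x
    rw [show t - (x + a) = (t - a) - x by ring, show x + a - a = x by ring, Complex.ofReal_sub]
    ring
  simp_rw [h2]
  rw [Complex.betaIntegral_scaled q p hc, Complex.betaIntegral_symm,
    show q + p - 1 = p + q - 1 by ring]

theorem tempered_integral_power (a : ℝ) (α β lam : ℂ) (hα : 0 < α.re) (hlam : -1 < lam.re)
    (t : ℝ) (ht : a < t) :
    temperedIntegral a α β (fun u => (↑(u - a) : ℂ) ^ lam) t =
      (↑(t - a) : ℂ) ^ (lam + α) * (Complex.Gamma (lam + 1) / Complex.Gamma (lam + α + 1)) *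
        hyp1F1 α (lam + α + 1) (-β * ↑(t - a)) := by
  have hc : (0:ℝ) < t - a := by linarith
  have hcc : (↑(t - a) : ℂ) ≠ 0 := by
    simp only [ne_eq, Complex.ofReal_eq_zero]; linarith
  have hq : 0 < (lam + 1).re := by simp only [Complex.add_re, Complex.one_re]; linarith
  have hpm : ∀ m : ℕ, 0 < (α + (m:ℂ)).re := by
    intro m
    simp only [Complex.add_re, Complex.natCast_re]
    positivity
  -- per-term integrability on Ioo
  have hint : ∀ m : ℕ, IntegrableOn
      (fun u : ℝ => ((-β) ^ m / (m.factorial : ℂ)) *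
        ((↑(t - u) : ℂ) ^ (α + ↑m - 1) * (↑(u - a) : ℂ) ^ (lam + 1 - 1)))
      (Set.Ioo a t) volume := by
    intro m
    exact (((betaKernel_intervalIntegrable ht (hpm m) hq).1).mono_set
      Set.Ioo_subset_Ioc_self).const_mul _
  have hint0 : IntegrableOn
      (fun u : ℝ => (↑(t - u) : ℂ) ^ (α - 1) * (↑(u - a) : ℂ) ^ (lam + 1 - 1))
      (Set.Ioo a t) volume :=
    ((betaKernel_intervalIntegrable ht hα hq).1).mono_set Set.Ioo_subset_Ioc_self
  -- norm bound
  have hnormle : ∀ (m : ℕ) (u : ℝ), u ∈ Set.Ioo a t →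
      ‖((-β) ^ m / (m.factorial : ℂ)) *
        ((↑(t - u) : ℂ) ^ (α + ↑m - 1) * (↑(u - a) : ℂ) ^ (lam + 1 - 1))‖
      ≤ ((‖β‖ * (t - a)) ^ m / m.factorial) *
        ‖(↑(t - u) : ℂ) ^ (α - 1) * (↑(u - a) : ℂ) ^ (lam + 1 - 1)‖ := by
    intro m u hu
    have h1 : (0:ℝ) < t - u := by linarith [hu.2]
    have e1 : ‖(↑(t - u) : ℂ) ^ (α + ↑m - 1)‖ = ‖(↑(t - u) : ℂ) ^ (α - 1)‖ * (t - u) ^ m := by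
      rw [Complex.norm_cpow_eq_rpow_re_of_pos h1,
        Complex.norm_cpow_eq_rpow_re_of_pos h1,
        show (α + ↑m - 1).re = (α - 1).re + (m : ℝ) by simp; ring,
        Real.rpow_add h1, Real.rpow_natCast]
    have e2 : ‖((-β) ^ m / (m.factorial : ℂ))‖ = ‖β‖ ^ m / m.factorial := by
      rw [norm_div, norm_pow, norm_neg]; simp
    rw [norm_mul, norm_mul, e1, e2, mul_pow]
    have hb : (t - u) ^ m ≤ (t - a) ^ m := pow_le_pow_left₀ h1.le (by linarith [hu.1]) m
    calc ‖β‖ ^ m / ↑m.factorial *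
          (‖(↑(t - u):ℂ) ^ (α - 1)‖ * (t - u) ^ m * ‖(↑(u - a):ℂ) ^ (lam + 1 - 1)‖)
        ≤ ‖β‖ ^ m / ↑m.factorial *
          (‖(↑(t - u):ℂ) ^ (α - 1)‖ * (t - a) ^ m * ‖(↑(u - a):ℂ) ^ (lam + 1 - 1)‖) := by
          gcongr
      _ = ‖β‖ ^ m * (t - a) ^ m / ↑m.factorial *
          (‖(↑(t - u):ℂ) ^ (α - 1)‖ * ‖(↑(u - a):ℂ) ^ (lam + 1 - 1)‖) := by ring
      _ = ‖β‖ ^ m * (t - a) ^ m / ↑m.factorial *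
          ‖(↑(t - u):ℂ) ^ (α - 1) * (↑(u - a):ℂ) ^ (lam + 1 - 1)‖ := by rw [norm_mul]
  -- summability of integrals of norms
  have hsum : Summable fun m : ℕ => ∫ u in Set.Ioo a t,
      ‖((-β) ^ m / (m.factorial : ℂ)) *
        ((↑(t - u) : ℂ) ^ (α + ↑m - 1) * (↑(u - a) : ℂ) ^ (lam + 1 - 1))‖ := by
    set K : ℝ := ∫ u in Set.Ioo a t,
      ‖(↑(t - u) : ℂ) ^ (α - 1) * (↑(u - a) : ℂ) ^ (lam + 1 - 1)‖ with hK
    apply Summable.of_nonneg_of_le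
      (fun m => integral_nonneg fun u => norm_nonneg _)
      (fun m => ?_) ((Real.summable_pow_div_factorial (‖β‖ * (t - a))).mul_right K)
    calc (∫ u in Set.Ioo a t, ‖((-β) ^ m / (m.factorial : ℂ)) *
          ((↑(t - u) : ℂ) ^ (α + ↑m - 1) * (↑(u - a) : ℂ) ^ (lam + 1 - 1))‖)
        ≤ ∫ u in Set.Ioo a t, ((‖β‖ * (t - a)) ^ m / m.factorial) *
          ‖(↑(t - u) : ℂ) ^ (α - 1) * (↑(u - a) : ℂ) ^ (lam + 1 - 1)‖ := by
          refine setIntegral_mono_on ((hint m).norm) (hint0.norm.const_mul _)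
            measurableSet_Ioo (fun u hu => hnormle m u hu)
      _ = (‖β‖ * (t - a)) ^ m / m.factorial * K := by
          rw [MeasureTheory.integral_const_mul]
  -- main computation
  rw [temperedIntegral]
  have key : (∫ u in a..t, (↑(t - u) : ℂ) ^ (α - 1) * Complex.exp (-β * ↑(t - u)) *
      (↑(u - a) : ℂ) ^ lam)
      = ∑' m : ℕ, ((-β) ^ m / (m.factorial : ℂ)) *
        ((↑(t - a) : ℂ) ^ (α + ↑m + (lam + 1) - 1) *
          (Complex.Gamma (α + ↑m) * Complex.Gamma (lam + 1) /
            Complex.Gamma (α + ↑m + (lam + 1)))) := by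
    rw [intervalIntegral.integral_of_le ht.le, integral_Ioc_eq_integral_Ioo]
    have step2 : (∫ u in Set.Ioo a t, (↑(t - u) : ℂ) ^ (α - 1) *
        Complex.exp (-β * ↑(t - u)) * (↑(u - a) : ℂ) ^ lam)
        = ∫ u in Set.Ioo a t, ∑' m : ℕ, ((-β) ^ m / (m.factorial : ℂ)) *
          ((↑(t - u) : ℂ) ^ (α + ↑m - 1) * (↑(u - a) : ℂ) ^ (lam + 1 - 1)) := by
      refine setIntegral_congr_fun measurableSet_Ioo fun u hu => ?_
      have hx : (↑(t - u) : ℂ) ≠ 0 := by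
        simp only [ne_eq, Complex.ofReal_eq_zero]
        intro h; linarith [hu.2, h]
      rw [Complex.exp_eq_exp_ℂ, NormedSpace.exp_eq_tsum_div, ← tsum_mul_left, ← tsum_mul_right]
      refine tsum_congr fun n => ?_
      rw [mul_pow, show lam + 1 - 1 = lam by ring,
        show α + (n : ℂ) - 1 = (α - 1) + (n : ℂ) by ring,
        Complex.cpow_add _ _ hx, Complex.cpow_natCast]
      ring
    rw [step2, ← integral_tsum_of_summable_integral_norm (fun m => hint m) hsum]
    refine tsum_congr fun m => ?_
    rw [MeasureTheory.integral_const_mul]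
    congr 1
    rw [← integral_Ioc_eq_integral_Ioo, ← intervalIntegral.integral_of_le ht.le,
      betaKernel_eval ht (α + ↑m) (lam + 1)]
    congr 1
    -- betaIntegral to Gamma
    have hne : Complex.Gamma (α + ↑m + (lam + 1)) ≠ 0 := by
      apply Complex.Gamma_ne_zero_of_re_pos
      simp only [Complex.add_re, Complex.natCast_re, Complex.one_re]
      have : (0:ℝ) ≤ (m:ℝ) := Nat.cast_nonneg m
      linarith
    rw [eq_div_iff hne, Complex.Gamma_mul_Gamma_eq_betaIntegral (hpm m) hq]
    ring
  rw [key, hyp1F1, ← tsum_mul_left, ← tsum_mul_left]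
  refine tsum_congr fun m => ?_
  have hGα : Complex.Gamma α ≠ 0 := Complex.Gamma_ne_zero_of_re_pos hα
  have hG1 : Complex.Gamma (lam + α + 1) ≠ 0 := by
    apply Complex.Gamma_ne_zero_of_re_pos
    simp only [Complex.add_re, Complex.one_re]; linarith
  have hG2 : Complex.Gamma (lam + α + 1 + ↑m) ≠ 0 := by
    apply Complex.Gamma_ne_zero_of_re_pos
    simp only [Complex.add_re, Complex.one_re, Complex.natCast_re]
    have : (0:ℝ) ≤ (m:ℝ) := Nat.cast_nonneg m
    linarith
  have hfac : ((m.factorial : ℂ)) ≠ 0 := by exact_mod_cast m.factorial_ne_zero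
  have hGeq : Complex.Gamma (α + ↑m + (lam + 1)) = Complex.Gamma (lam + α + 1 + ↑m) := by
    ring_nf
  have hcpow : (↑(t - a) : ℂ) ^ (α + ↑m + (lam + 1) - 1)
      = (↑(t - a) : ℂ) ^ (lam + α) * (↑(t - a) : ℂ) ^ (m : ℕ) := by
    rw [show α + ↑m + (lam + 1) - 1 = (lam + α) + (m : ℂ) by ring,
      Complex.cpow_add _ _ hcc, Complex.cpow_natCast]
  rw [hGeq, hcpow, mul_pow (-β) ((t - a : ℝ) : ℂ)]
  field_simp
end

section
/- For Re(α) > 0, Re(ν) > 0, and β ∈ ℂ, the tempered fractional integral of the function e^{-βt}(t-a)^{ν-1} is T_a I^(α,β) [e^{-βu}(u-a)^{ν-1}](t) = (Γ(ν)/Γ(ν+α)) e^{-βt} (t-a)^{α+ν-1} for t > a. -/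
open MeasureTheory intervalIntegral

theorem tempered_integral_exp_power (a : ℝ) (α β ν : ℂ) (hα : 0 < α.re) (hν : 0 < ν.re)
    (t : ℝ) (ht : a < t) :
    temperedIntegral a α β (fun u => Complex.exp (-β * u) * (↑(u - a) : ℂ) ^ (ν - 1)) t =
      (Complex.Gamma ν / Complex.Gamma (ν + α)) * Complex.exp (-β * t) *
        (↑(t - a) : ℂ) ^ (α + ν - 1) := by
  unfold temperedIntegral
  have h1 : ∀ u : ℝ, (↑(t - u) : ℂ) ^ (α - 1) * Complex.exp (-β * ↑(t - u)) *
      (Complex.exp (-β * u) * (↑(u - a) : ℂ) ^ (ν - 1)) =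
      Complex.exp (-β * t) * ((↑(u - a) : ℂ) ^ (ν - 1) * (↑(t - u) : ℂ) ^ (α - 1)) := by
    intro u
    have he : Complex.exp (-β * ↑(t - u)) * Complex.exp (-β * (u:ℂ)) =
        Complex.exp (-β * (t:ℂ)) := by
      rw [← Complex.exp_add]; congr 1; push_cast; ring
    linear_combination ((↑(t - u) : ℂ) ^ (α - 1) * (↑(u - a) : ℂ) ^ (ν - 1)) * he
  simp_rw [h1]
  rw [intervalIntegral.integral_const_mul]
  have h2 : (∫ u in a..t, (↑(u - a) : ℂ) ^ (ν - 1) * (↑(t - u) : ℂ) ^ (α - 1)) =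
      ∫ x in (0:ℝ)..(t - a), (x : ℂ) ^ (ν - 1) * ((↑(t - a) : ℂ) - x) ^ (α - 1) := by
    have h3 := intervalIntegral.integral_comp_sub_right (a := a) (b := t)
      (fun x : ℝ => (x : ℂ) ^ (ν - 1) * ((↑(t - a) : ℂ) - (x : ℂ)) ^ (α - 1)) a
    rw [sub_self] at h3
    rw [← h3]
    refine intervalIntegral.integral_congr fun u _ => ?_

    congr 2
    push_cast
    ring
  rw [h2, Complex.betaIntegral_scaled ν α (by linarith : 0 < t - a)]
  have hΓ : Complex.Gamma ν * Complex.Gamma α =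
      Complex.Gamma (ν + α) * Complex.betaIntegral ν α :=
    Complex.Gamma_mul_Gamma_eq_betaIntegral hν hα
  have hΓα : Complex.Gamma α ≠ 0 := Complex.Gamma_ne_zero_of_re_pos hα
  have hΓνα : Complex.Gamma (ν + α) ≠ 0 := by
    apply Complex.Gamma_ne_zero_of_re_pos
    rw [Complex.add_re]; linarith
  have hbeta : Complex.betaIntegral ν α =
      Complex.Gamma ν * Complex.Gamma α / Complex.Gamma (ν + α) := by
    field_simp
    linear_combination -hΓ
  rw [hbeta, show ν + α - 1 = α + ν - 1 by ring]
  field_simp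
end
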